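/- Let R be a commutative ring and let (M_i)_{i∈I} be a family of R-modules such that for each i, multiplication by r is injective on M_i ⊗_R R/J for a fixed finitely presented quotient R/J and element r ∈ R. Then multiplication by r is injective on (∏_i M_i) ⊗_R R/J. -/

import Mathlib

open TensorProduct

/-- If `x` lies in `span t • ⊤`, then `x` is a combination `∑ g ∈ t, g • v g`. -/
lemma mem_finset_span_smul_top_sum {R M : Type*} [CommRing R] [AddCommGroup M] [Module R M]
    (t : Finset R) (x : M) (hx : x ∈ Ideal.span (t : Set R) • (⊤ : Submodule R M)) :
    ∃ v : R → M, x = ∑ g ∈ t, g • v g := by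
  refine Submodule.smul_induction_on hx ?_ ?_
  · intro a ha n _
    obtain ⟨c, -, hc⟩ := Submodule.mem_span_finset.mp ha
    refine ⟨fun g => c g • n, ?_⟩
    rw [← hc, Finset.sum_smul]
    refine Finset.sum_congr rfl fun g _ => ?_
    rw [smul_eq_mul, mul_comm, mul_smul]
  · rintro x y ⟨v, hv⟩ ⟨w, hw⟩
    refine ⟨fun g => v g + w g, ?_⟩
    simp [hv, hw, smul_add, Finset.sum_add_distrib]

/-- Let `R` be a commutative ring, `J ⊆ R` an ideal with `R/J`
finitely presented as an `R`-module, and `r ∈ R`.  If for every `i` multiplication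
by `r` is injective on `M i ⊗[R] R/J`, then multiplication by `r` is injective on
`(∏ i, M i) ⊗[R] R/J`. -/
theorem smul_injective_on_pi_tensor_quotient {R : Type*} [CommRing R]
    {ι : Type*} (M : ι → Type*) [∀ i, AddCommGroup (M i)] [∀ i, Module R (M i)]
    (J : Ideal R) [Module.FinitePresentation R (R ⧸ J)] (r : R)
    (hinj : ∀ i, Function.Injective (fun x : M i ⊗[R] (R ⧸ J) => r • x)) :
    Function.Injective (fun x : ((i : ι) → M i) ⊗[R] (R ⧸ J) => r • x) := by
  classical
  -- `J` is finitely generated since `R ⧸ J` is finitely presented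
  have hJ : J.FG := by
    have h := Module.FinitePresentation.fg_ker (R := R) (M := R) (N := R ⧸ J) J.mkQ
      (Submodule.Quotient.mk_surjective J)
    rwa [Submodule.ker_mkQ] at h
  obtain ⟨t, ht⟩ := hJ
  -- transfer the hypothesis through `M i ⊗ R/J ≃ M i ⧸ J • ⊤`
  have key : ∀ i, ∀ x : M i, r • x ∈ J • (⊤ : Submodule R (M i)) →
      x ∈ J • (⊤ : Submodule R (M i)) := by
    intro i x hx
    set e := TensorProduct.tensorQuotEquivQuotSMul (M i) J with he
    have hqinj : Function.Injective
        (fun y : M i ⧸ J • (⊤ : Submodule R (M i)) => r • y) := by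
      intro a b hab
      obtain ⟨a', rfl⟩ := e.surjective a
      obtain ⟨b', rfl⟩ := e.surjective b
      have : r • a' = r • b' := by
        apply e.injective
        simpa only [map_smul] using hab
      rw [hinj i this]
    have h0 : r • (Submodule.Quotient.mk x : M i ⧸ J • (⊤ : Submodule R (M i)))
        = r • (0 : M i ⧸ J • (⊤ : Submodule R (M i))) := by
      rw [smul_zero, ← Submodule.Quotient.mk_smul]
      exact (Submodule.Quotient.mk_eq_zero _).mpr hx
    have := hqinj h0
    exact (Submodule.Quotient.mk_eq_zero _).mp this
  -- injectivity on the quotient of the product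
  have hq : ∀ m : (i : ι) → M i, r • m ∈ J • (⊤ : Submodule R ((i : ι) → M i)) →
      m ∈ J • (⊤ : Submodule R ((i : ι) → M i)) := by
    intro m hm
    have hcomp : ∀ i, m i ∈ J • (⊤ : Submodule R (M i)) := by
      intro i
      apply key i
      have h1 : (r • m) i ∈ (J • (⊤ : Submodule R ((i : ι) → M i))).map
          (LinearMap.proj (R := R) (φ := M) i) := Submodule.mem_map_of_mem hm
      rw [Submodule.map_smul''] at h1
      have h2 : (r • m) i = r • m i := rfl
      rw [h2] at h1
      exact Submodule.smul_mono le_rfl le_top h1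
    choose v hv using fun i =>
      mem_finset_span_smul_top_sum t (m i) (by rw [ht]; exact hcomp i)
    have hmsum : m = ∑ g ∈ t, g • (fun i => v i g) := by
      funext i
      rw [hv i]
      simp
    rw [hmsum]
    refine Submodule.sum_mem _ fun g hg => ?_
    exact Submodule.smul_mem_smul (ht ▸ Submodule.subset_span hg) trivial
  -- conclude
  intro x y hxy
  set e := TensorProduct.tensorQuotEquivQuotSMul ((i : ι) → M i) J with he
  apply e.injective
  obtain ⟨m, hmk⟩ := Submodule.Quotient.mk_surjective _ (e x - e y)
  have hr : r • (e x - e y) = 0 := by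
    have : r • e x = r • e y := by
      simpa only [map_smul] using congrArg e hxy
    rw [smul_sub, this, sub_self]
  rw [← hmk, ← Submodule.Quotient.mk_smul, Submodule.Quotient.mk_eq_zero] at hr
  have := hq m hr
  have hz : e x - e y = 0 := by
    rw [← hmk, Submodule.Quotient.mk_eq_zero]
    exact this
  exact sub_eq_zero.mp hz
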